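/- Let Ω ⊆ ℝ² be a convex set with diameter ≤ 1, let ε > 0, and let x ∈ Ω be a point whose distance to the frontier (topological boundary) of Ω is strictly greater than ε. Then for every y ∈ Ω one has ‖x − y‖ < 1 − ε. -/
import Mathlib

/-- If `Ω ⊆ ℝ²` is convex with diameter `≤ 1` and `x ∈ Ω` has distance `> ε` to the
frontier of `Ω`, then `‖x - y‖ < 1 - ε` for every `y ∈ Ω`. -/
theorem deep_points_are_not_antipodal (Ω : Set (EuclideanSpace ℝ (Fin 2)))
    (hconv : Convex ℝ Ω) (hdiam : ∀ p ∈ Ω, ∀ q ∈ Ω, dist p q ≤ 1)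
    (ε : ℝ) (hε : 0 < ε) (x : EuclideanSpace ℝ (Fin 2)) (hx : x ∈ Ω)
    (hdeep : ε < Metric.infDist x (frontier Ω)) :
    ∀ y ∈ Ω, ‖x - y‖ < 1 - ε := by
  intro y hy
  -- frontier is nonempty
  rcases Set.eq_empty_or_nonempty (frontier Ω) with hfe | ⟨f, hf⟩
  · rw [hfe, Metric.infDist_empty] at hdeep; linarith
  have hxf : dist x f ≤ 1 := by
    have hcl : closure Ω ⊆ {q | dist x q ≤ 1} :=
      closure_minimal (fun q hq => hdiam x hx q hq)
        (isClosed_le (continuous_const.dist continuous_id) continuous_const)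
    exact hcl (frontier_subset_closure hf)
  have hε1 : ε < 1 :=
    lt_of_lt_of_le hdeep (le_trans (Metric.infDist_le_dist_of_mem hf) hxf)
  set d := Metric.infDist x (frontier Ω) with hd
  set r : ℝ := (ε + d) / 2 with hr
  have hεr : ε < r := by simp only [hr]; linarith
  have hrd : r < d := by simp only [hr]; linarith
  have hrpos : 0 < r := lt_trans hε hεr
  -- x is in the interior of Ω
  have hxint : x ∈ interior Ω := by
    have hxnf : x ∉ frontier Ω := by
      intro hxfr
      have : d ≤ dist x x := Metric.infDist_le_dist_of_mem hxfr
      rw [dist_self] at this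
      linarith
    rcases Set.eq_empty_or_nonempty (interior Ω) with hie | _
    · exfalso
      apply hxnf
      rw [frontier, hie, Set.diff_empty]
      exact subset_closure hx
    rw [frontier] at hxnf
    by_contra h
    exact hxnf ⟨subset_closure hx, h⟩
  -- closed ball of radius r around x is inside Ω
  have hball : Metric.closedBall x r ⊆ Ω := by
    have hpre : IsPreconnected (Metric.closedBall x r) :=
      (convex_closedBall x r).isPreconnected
    have hsub : Metric.closedBall x r ⊆ interior Ω ∪ (closure Ω)ᶜ := by
      intro z hz
      by_contra h
      simp only [Set.mem_union, Set.mem_compl_iff, not_or, not_not] at h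
      have hzf : z ∈ frontier Ω := ⟨h.2, h.1⟩
      have : d ≤ dist x z := Metric.infDist_le_dist_of_mem hzf
      have hzr : dist x z ≤ r := Metric.mem_closedBall'.mp hz
      linarith
    have := hpre.subset_left_of_subset_union isOpen_interior
      isClosed_closure.isOpen_compl
      (Set.disjoint_compl_right_iff_subset.mpr interior_subset_closure)
      hsub ⟨x, Metric.mem_closedBall_self hrpos.le, hxint⟩
    exact this.trans interior_subset
  by_cases hxy : x = y
  · subst hxy; simp; linarith
  · set v := x - y with hv
    have hvne : v ≠ 0 := sub_ne_zero.mpr hxy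
    have hvpos : 0 < ‖v‖ := norm_pos_iff.mpr hvne
    set z : EuclideanSpace ℝ (Fin 2) := x + (r / ‖v‖) • v with hz
    have hzball : z ∈ Metric.closedBall x r := by
      rw [Metric.mem_closedBall, dist_eq_norm, hz]
      simp only [add_sub_cancel_left]
      rw [norm_smul, norm_div, Real.norm_eq_abs, abs_of_pos hrpos, norm_norm]
      rw [div_mul_cancel₀ _ hvpos.ne']
    have hzΩ : z ∈ Ω := hball hzball
    have hzy : dist z y ≤ 1 := hdiam z hzΩ y hy
    have : z - y = (1 + r / ‖v‖) • v := by
      rw [hz, hv, add_smul, one_smul]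
      abel
    rw [dist_eq_norm, this, norm_smul, Real.norm_eq_abs,
      abs_of_pos (by positivity), add_mul, one_mul,
      div_mul_cancel₀ _ hvpos.ne'] at hzy
    linarith
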